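/- Let X and Y be locally compact, connected Hausdorff spaces, ρ a quasi-integral on C_c(X) with corresponding topological measure μ, and η a quasi-integral on C_c(Y) with corresponding topological measure ν. If μ and ν are both almost simple but neither is a measure (i.e., neither is subadditive; equivalently neither extends to a Borel measure), then η × ρ ≠ ρ × η as functionals on C_c(X × Y). -/

import Mathlib

open scoped ENNReal CompactlySupported
open CompactlySupportedContinuousMap

namespace QLF

variable {X Y : Type*}

/-- Membership in the singly generated subalgebra `B(f)`:
`g ∈ B(f)` iff `g = φ ∘ f` for some continuous `φ` with `φ 0 = 0`. -/
def InB [TopologicalSpace X] (f g : C_c(X, ℝ)) : Prop :=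
  ∃ φ : C(ℝ, ℝ), φ 0 = 0 ∧ ∀ x, g x = φ (f x)

/-- A quasi-integral (quasi-linear functional) on `C_c(X)`. -/
structure IsQuasiIntegral [TopologicalSpace X] (ρ : C_c(X, ℝ) → ℝ) : Prop where
  smul : ∀ (a : ℝ) (f : C_c(X, ℝ)), ρ (a • f) = a * ρ f
  add : ∀ f g h : C_c(X, ℝ), InB f g → InB f h → ρ (g + h) = ρ g + ρ h
  pos : ∀ f : C_c(X, ℝ), (∀ x, 0 ≤ f x) → 0 ≤ ρ f

/-- The value of the topological measure corresponding to `ρ` on an open set. -/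
noncomputable def qiOpen [TopologicalSpace X] (ρ : C_c(X, ℝ) → ℝ) (U : Set X) : ℝ≥0∞ :=
  ⨆ (f : C_c(X, ℝ)) (_ : (∀ x, 0 ≤ f x ∧ f x ≤ 1) ∧ tsupport f ⊆ U), ENNReal.ofReal (ρ f)

open Classical in
/-- The topological measure corresponding to a quasi-integral `ρ`:
on open sets given by `qiOpen`, on other (closed) sets by outer regularity. -/
noncomputable def qiMeas [TopologicalSpace X] (ρ : C_c(X, ℝ) → ℝ) (A : Set X) : ℝ≥0∞ :=
  if IsOpen A then qiOpen ρ A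
  else ⨅ (U : Set X) (_ : IsOpen U ∧ A ⊆ U), qiOpen ρ U

/-- A topological measure on `X` (as a set function on all sets; only its values on
open and closed sets are constrained/meaningful). -/
def IsTopMeasure [TopologicalSpace X] (μ : Set X → ℝ≥0∞) : Prop :=
  (∀ A B : Set X, Disjoint A B → (IsCompact A ∨ IsOpen A) → (IsCompact B ∨ IsOpen B) →
      (IsCompact (A ∪ B) ∨ IsOpen (A ∪ B)) → μ (A ∪ B) = μ A + μ B) ∧
  (∀ U : Set X, IsOpen U → μ U = ⨆ (K : Set X) (_ : IsCompact K ∧ K ⊆ U), μ K) ∧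
  (∀ F : Set X, IsClosed F → μ F = ⨅ (U : Set X) (_ : IsOpen U ∧ F ⊆ U), μ U)

/-- A simple topological measure: assumes only the values 0 and 1 on open and closed sets. -/
def IsSimpleTM [TopologicalSpace X] (μ : Set X → ℝ≥0∞) : Prop :=
  IsTopMeasure μ ∧ ∀ A : Set X, IsOpen A ∨ IsClosed A → μ A = 0 ∨ μ A = 1

/-- A simple quasi-integral: its corresponding topological measure assumes only 0 and 1. -/
def IsSimpleQI [TopologicalSpace X] (ρ : C_c(X, ℝ) → ℝ) : Prop :=
  ∀ A : Set X, IsOpen A ∨ IsClosed A → qiMeas ρ A = 0 ∨ qiMeas ρ A = 1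

/-- An almost simple quasi-integral: its corresponding topological measure is a positive
scalar multiple of a simple topological measure. -/
def IsAlmostSimpleQI [TopologicalSpace X] (ρ : C_c(X, ℝ) → ℝ) : Prop :=
  ∃ (c : ℝ≥0∞) (μ' : Set X → ℝ≥0∞), 0 < c ∧ c ≠ ∞ ∧ IsSimpleTM μ' ∧
    ∀ A : Set X, IsOpen A ∨ IsClosed A → qiMeas ρ A = c * μ' A

/-- The composition `φ ∘ f` as an element of `C_c(X, ℝ)`, for continuous `φ` with `φ 0 = 0`. -/
noncomputable def compCc [TopologicalSpace X] (φ : C(ℝ, ℝ)) (hφ : φ 0 = 0)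
    (f : C_c(X, ℝ)) : C_c(X, ℝ) :=
  ⟨⟨fun x => φ (f x), φ.continuous.comp f.continuous⟩, f.hasCompactSupport'.comp_left hφ⟩

section Products

variable [TopologicalSpace X] [TopologicalSpace Y]

/-- The section `f_y ∈ C_c(X)` of `f ∈ C_c(X × Y)`, `f_y (x) = f (x, y)`. -/
noncomputable def fiberY [T2Space X] (f : C_c(X × Y, ℝ)) (y : Y) : C_c(X, ℝ) :=
  ⟨⟨fun x => f (x, y), f.continuous.comp (continuous_id.prodMk continuous_const)⟩,
    HasCompactSupport.intro (f.hasCompactSupport'.image continuous_fst)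
      (fun x hx => by
        by_contra h
        exact hx ⟨(x, y), subset_tsupport _ h, rfl⟩)⟩

/-- The section `f_x ∈ C_c(Y)` of `f ∈ C_c(X × Y)`, `f_x (y) = f (x, y)`. -/
noncomputable def fiberX [T2Space Y] (f : C_c(X × Y, ℝ)) (x : X) : C_c(Y, ℝ) :=
  ⟨⟨fun y => f (x, y), f.continuous.comp (continuous_const.prodMk continuous_id)⟩,
    HasCompactSupport.intro (f.hasCompactSupport'.image continuous_snd)
      (fun y hy => by
        by_contra h
        exact hy ⟨(x, y), subset_tsupport _ h, rfl⟩)⟩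

/-- `T_ρ(f) (y) = ρ (f_y)` as a bare function on `Y`. -/
noncomputable def Tmap [T2Space X] (ρ : C_c(X, ℝ) → ℝ) (f : C_c(X × Y, ℝ)) : Y → ℝ :=
  fun y => ρ (fiberY f y)

/-- `S_η(f) (x) = η (f_x)` as a bare function on `X`. -/
noncomputable def Smap [T2Space Y] (η : C_c(Y, ℝ) → ℝ) (f : C_c(X × Y, ℝ)) : X → ℝ :=
  fun x => η (fiberX f x)

open Classical in
/-- `T_ρ(f)` as an element of `C_c(Y, ℝ)` (when `ρ` is a quasi-integral, `T_ρ(f)` is indeed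
continuous with compact support, and this definition takes the first branch). -/
noncomputable def TCc [T2Space X] (ρ : C_c(X, ℝ) → ℝ) (f : C_c(X × Y, ℝ)) : C_c(Y, ℝ) :=
  if h : Continuous (Tmap ρ f) ∧ HasCompactSupport (Tmap ρ f)
  then ⟨⟨Tmap ρ f, h.1⟩, h.2⟩ else 0

open Classical in
/-- `S_η(f)` as an element of `C_c(X, ℝ)`. -/
noncomputable def SCc [T2Space Y] (η : C_c(Y, ℝ) → ℝ) (f : C_c(X × Y, ℝ)) : C_c(X, ℝ) :=
  if h : Continuous (Smap η f) ∧ HasCompactSupport (Smap η f)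
  then ⟨⟨Smap η f, h.1⟩, h.2⟩ else 0

/-- The repeated quasi-integral `(η × ρ) (f) = η (T_ρ (f))`. -/
noncomputable def prodQI [T2Space X] (η : C_c(Y, ℝ) → ℝ) (ρ : C_c(X, ℝ) → ℝ) :
    C_c(X × Y, ℝ) → ℝ := fun f => η (TCc ρ f)

/-- The repeated quasi-integral `(ρ × η) (f) = ρ (S_η (f))`. -/
noncomputable def prodQI' [T2Space Y] (ρ : C_c(X, ℝ) → ℝ) (η : C_c(Y, ℝ) → ℝ) :
    C_c(X × Y, ℝ) → ℝ := fun f => ρ (SCc η f)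

/-- The tensor product `(g ⊗ h) (x, y) = g (x) * h (y)` as an element of `C_c(X × Y, ℝ)`. -/
noncomputable def tensor (g : C_c(X, ℝ)) (h : C_c(Y, ℝ)) : C_c(X × Y, ℝ) :=
  ⟨⟨fun p => g p.1 * h p.2,
      (g.continuous.comp continuous_fst).mul (h.continuous.comp continuous_snd)⟩,
    HasCompactSupport.intro' (g.hasCompactSupport'.prod h.hasCompactSupport')
      ((isClosed_tsupport _).prod (isClosed_tsupport _))
      (fun p hp => by
        rcases not_and_or.mp (by simpa [Set.mem_prod] using hp) with h1 | h1
        · simp [image_eq_zero_of_notMem_tsupport h1]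
        · simp [image_eq_zero_of_notMem_tsupport h1])⟩

end Products

/-- A topological measure is subadditive (equivalently, extends to a Borel measure). -/
def IsSubadditiveOnOpens [TopologicalSpace X] (μ : Set X → ℝ≥0∞) : Prop :=
  ∀ U V : Set X, IsOpen U → IsOpen V → μ (U ∪ V) ≤ μ U + μ V

/-- `μ` is a positive scalar multiple of a point mass `δ_{x₀}` (on open and closed sets). -/
def IsPointMassMultiple [TopologicalSpace X] (μ : Set X → ℝ≥0∞) : Prop :=
  ∃ (c : ℝ≥0∞) (x₀ : X), 0 < c ∧ c ≠ ∞ ∧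
    ∀ A : Set X, IsOpen A ∨ IsClosed A →
      μ A = c * A.indicator (fun _ => (1 : ℝ≥0∞)) x₀

end QLF

namespace QLF

open Set Function

section Core

variable {Z : Type*} [TopologicalSpace Z] {ρ : C_c(Z, ℝ) → ℝ}

lemma qi_zero (hρ : IsQuasiIntegral ρ) : ρ 0 = 0 := by
  have h := hρ.smul 0 0
  simpa using h

lemma qi_exists_bound (f : C_c(Z, ℝ)) : ∃ M : ℝ, 0 < M ∧ ∀ x, f x ≤ M := by
  obtain ⟨B, hB⟩ := f.continuous.bddAbove_range_of_hasCompactSupport f.hasCompactSupport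
  refine ⟨max B 1, lt_of_lt_of_le one_pos (le_max_right _ _), fun x => ?_⟩
  exact le_trans (hB ⟨x, rfl⟩) (le_max_left _ _)

lemma qiMeas_of_isOpen {U : Set Z} (hU : IsOpen U) : qiMeas ρ U = qiOpen ρ U := if_pos hU

lemma qiOpen_mono {U V : Set Z} (h : U ⊆ V) : qiOpen ρ U ≤ qiOpen ρ V := by
  refine iSup_mono fun f => ?_
  exact iSup_le fun ⟨hf, hsupp⟩ => le_iSup_of_le ⟨hf, hsupp.trans h⟩ le_rfl

lemma ofReal_le_qiOpen {U : Set Z} {f : C_c(Z, ℝ)}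
    (hf : ∀ x, 0 ≤ f x ∧ f x ≤ 1) (hsupp : tsupport f ⊆ U) :
    ENNReal.ofReal (ρ f) ≤ qiOpen ρ U :=
  le_iSup_of_le f (le_iSup_of_le ⟨hf, hsupp⟩ le_rfl)

lemma qiMeas_empty (hρ : IsQuasiIntegral ρ) : qiMeas ρ (∅ : Set Z) = 0 := by
  rw [qiMeas_of_isOpen isOpen_empty]
  refine le_antisymm (iSup_le fun f => iSup_le fun hf => ?_) (zero_le)
  have hf0 : f = 0 := by
    refine CompactlySupportedContinuousMap.ext fun x => ?_
    have : x ∉ tsupport f := fun hx => (hf.2 hx).elim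
    simpa using image_eq_zero_of_notMem_tsupport this
  rw [hf0, qi_zero hρ]
  simp

/-- scaling upper bound : if `0 ≤ f ≤ M` and `tsupport f ⊆ U` then `ρ f ≤ M * μ(U)`. -/
lemma qi_scale_bound (hρ : IsQuasiIntegral ρ) {f : C_c(Z, ℝ)} {U : Set Z} {M : ℝ}
    (hU : IsOpen U) (hM : 0 < M) (hf0 : ∀ x, 0 ≤ f x) (hfM : ∀ x, f x ≤ M)
    (hsupp : tsupport f ⊆ U) (hfin : qiMeas ρ U ≠ ⊤) :
    ρ f ≤ M * (qiMeas ρ U).toReal := by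
  set k : C_c(Z, ℝ) := M⁻¹ • f with hk
  have hkx : ∀ x, k x = M⁻¹ * f x := fun x => rfl
  have hksupp : tsupport k ⊆ U := by
    refine subset_trans (closure_minimal (fun x hx => ?_) (isClosed_tsupport f)) hsupp
    simp only [mem_support, hkx] at hx
    exact subset_tsupport f (fun h0 : f x = 0 => hx (by rw [h0, mul_zero]))
  have hcand : ∀ x, 0 ≤ k x ∧ k x ≤ 1 := fun x => by
    constructor
    · rw [hkx]; exact mul_nonneg (inv_nonneg.mpr hM.le) (hf0 x)
    · rw [hkx]
      rw [inv_mul_le_iff₀ hM, mul_one]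
      exact hfM x
  have h1 : ENNReal.ofReal (ρ k) ≤ qiMeas ρ U := by
    rw [qiMeas_of_isOpen hU]
    exact ofReal_le_qiOpen hcand hksupp
  have h2 : ρ k ≤ (qiMeas ρ U).toReal := (ENNReal.ofReal_le_iff_le_toReal hfin).mp h1
  have h3 : ρ k = M⁻¹ * ρ f := hρ.smul M⁻¹ f
  rw [h3] at h2
  calc ρ f = M * (M⁻¹ * ρ f) := by field_simp
  _ ≤ M * (qiMeas ρ U).toReal := by
      exact mul_le_mul_of_nonneg_left h2 hM.le

/--支持 in a null open set implies `ρ f = 0`. -/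
lemma qi_zero_of_null (hρ : IsQuasiIntegral ρ) {f : C_c(Z, ℝ)} {U : Set Z}
    (hU : IsOpen U) (hf0 : ∀ x, 0 ≤ f x) (hsupp : tsupport f ⊆ U)
    (hnull : qiMeas ρ U = 0) : ρ f = 0 := by
  obtain ⟨M, hM, hfM⟩ := qi_exists_bound f
  have h := qi_scale_bound hρ hU hM hf0 hfM hsupp (by rw [hnull]; exact ENNReal.zero_ne_top)
  rw [hnull] at h
  simp only [ENNReal.toReal_zero, mul_zero] at h
  exact le_antisymm h (hρ.pos f hf0)

end Core

end QLF


namespace QLF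

open Set Function

section Core2

variable {Z : Type*} [TopologicalSpace Z] {ρ : C_c(Z, ℝ) → ℝ}

/-- `min (·) c` as a continuous map. -/
noncomputable def phiMin (c : ℝ) : C(ℝ, ℝ) := ⟨fun s => min s c, continuous_id.min continuous_const⟩

/-- `max (· - c) 0` as a continuous map. -/
noncomputable def phiExc (c : ℝ) : C(ℝ, ℝ) :=
  ⟨fun s => max (s - c) 0, (continuous_id.sub continuous_const).max continuous_const⟩

/-- `min (max (· - c) 0) c` as a continuous map. -/
noncomputable def phiCap (c : ℝ) : C(ℝ, ℝ) :=
  ⟨fun s => min (max (s - c) 0) c,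
    (((continuous_id.sub continuous_const).max continuous_const).min continuous_const)⟩

/-- difference `phiMin c - phiCap c` as a continuous map. -/
noncomputable def phiDiff (c : ℝ) : C(ℝ, ℝ) :=
  ⟨fun s => min s c - min (max (s - c) 0) c,
    ((continuous_id.min continuous_const).sub
      (((continuous_id.sub continuous_const).max continuous_const).min continuous_const))⟩

lemma phiMin_zero {c : ℝ} (hc : 0 ≤ c) : phiMin c 0 = 0 := min_eq_left hc
lemma phiExc_zero {c : ℝ} (hc : 0 ≤ c) : phiExc c 0 = 0 := max_eq_right (by linarith)
lemma phiCap_zero {c : ℝ} (hc : 0 ≤ c) : phiCap c 0 = 0 := by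
  show min (max (0 - c) 0) c = 0
  rw [max_eq_right (by linarith)]
  exact min_eq_left hc
lemma phiDiff_zero {c : ℝ} (hc : 0 ≤ c) : phiDiff c 0 = 0 := by
  show min 0 c - min (max (0 - c) 0) c = 0
  rw [max_eq_right (by linarith), min_eq_left hc]; ring

lemma compCc_apply (φ : C(ℝ, ℝ)) (hφ : φ 0 = 0) (f : C_c(Z, ℝ)) (x : Z) :
    compCc φ hφ f x = φ (f x) := rfl

lemma inB_compCc (φ : C(ℝ, ℝ)) (hφ : φ 0 = 0) (f : C_c(Z, ℝ)) : InB f (compCc φ hφ f) :=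
  ⟨φ, hφ, fun _ => rfl⟩

/-- additivity of `ρ` on a singly-generated subalgebra. -/
lemma qi_comp_add (hρ : IsQuasiIntegral ρ) (f : C_c(Z, ℝ)) (φ ψ ξ : C(ℝ, ℝ))
    (hφ : φ 0 = 0) (hψ : ψ 0 = 0) (hξ : ξ 0 = 0)
    (hsum : ∀ s, φ s = ψ s + ξ s) :
    ρ (compCc φ hφ f) = ρ (compCc ψ hψ f) + ρ (compCc ξ hξ f) := by
  have h : compCc φ hφ f = compCc ψ hψ f + compCc ξ hξ f := by
    refine CompactlySupportedContinuousMap.ext fun x => ?_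
    rw [CompactlySupportedContinuousMap.add_apply]
    exact hsum (f x)
  rw [h]
  exact hρ.add f _ _ (inB_compCc ψ hψ f) (inB_compCc ξ hξ f)

/-- layer decomposition: `ρ f = ρ (min (f, c)) + ρ ((f - c)⁺)`. -/
lemma qi_layer (hρ : IsQuasiIntegral ρ) (f : C_c(Z, ℝ)) {c : ℝ} (hc : 0 < c) :
    ρ f = ρ (compCc (phiMin c) (phiMin_zero hc.le) f)
        + ρ (compCc (phiExc c) (phiExc_zero hc.le) f) := by
  have hid : compCc ⟨id, continuous_id⟩ rfl f = f :=
    CompactlySupportedContinuousMap.ext fun x => rfl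
  have h := qi_comp_add hρ f ⟨id, continuous_id⟩ (phiMin c) (phiExc c) rfl
    (phiMin_zero hc.le) (phiExc_zero hc.le) (fun s => ?_)
  · rw [hid] at h; exact h
  · show (s : ℝ) = min s c + max (s - c) 0
    rcases le_total s c with h | h
    · rw [min_eq_left h, max_eq_right (by linarith)]; ring
    · rw [min_eq_right h, max_eq_left (by linarith)]; ring

/-- The key comparison lemma : if `0 ≤ k ≤ c` and `f ≥ c ≥ 0` on `tsupport k`, then
`ρ k ≤ ρ f`. -/
lemma qi_comparison (hρ : IsQuasiIntegral ρ) {f k : C_c(Z, ℝ)} {c : ℝ} (hc : 0 < c)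
    (hf0 : ∀ x, 0 ≤ f x) (hk0 : ∀ x, 0 ≤ k x) (hkc : ∀ x, k x ≤ c)
    (hsup : ∀ x ∈ tsupport k, c ≤ f x) : ρ k ≤ ρ f := by
  set m : C_c(Z, ℝ) := compCc (phiMin c) (phiMin_zero hc.le) f with hm
  have hmx : ∀ x, m x = min (f x) c := fun x => rfl
  have hm_le : ∀ x, m x ≤ c := fun x => min_le_right _ _
  have hm0 : ∀ x, 0 ≤ m x := fun x => le_min (hf0 x) hc.le
  -- ρ m ≤ ρ f
  have hmf : ρ m ≤ ρ f := by
    rw [qi_layer hρ f hc]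
    have hpos : 0 ≤ ρ (compCc (phiExc c) (phiExc_zero hc.le) f) :=
      hρ.pos _ (fun x => le_max_right _ _)
    linarith
  -- m = c on the support of k
  have hmc : ∀ x, k x ≠ 0 → m x = c := by
    intro x hx
    rw [hmx]
    exact min_eq_right (hsup x (subset_tsupport _ hx))
  set w : C_c(Z, ℝ) := m + k with hw
  have hwx : ∀ x, w x = m x + k x := fun x => rfl
  have hA : compCc (phiMin c) (phiMin_zero hc.le) w = m := by
    refine CompactlySupportedContinuousMap.ext fun x => ?_
    rw [compCc_apply]
    show min (w x) c = m x
    by_cases hx : k x = 0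
    · rw [hwx, hx, add_zero]; exact min_eq_left (hm_le x)
    · rw [hwx, hmc x hx]
      exact min_eq_right (by linarith [hk0 x])
  have hB : compCc (phiCap c) (phiCap_zero hc.le) w = k := by
    refine CompactlySupportedContinuousMap.ext fun x => ?_
    rw [compCc_apply]
    show min (max (w x - c) 0) c = k x
    by_cases hx : k x = 0
    · rw [hwx, hx, add_zero, max_eq_right (by linarith [hm_le x]), min_eq_left hc.le]
    · rw [hwx, hmc x hx]
      have : c + k x - c = k x := by ring
      rw [this, max_eq_left (hk0 x), min_eq_left (hkc x)]
  have hkey : ρ (compCc (phiMin c) (phiMin_zero hc.le) w)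
      = ρ (compCc (phiCap c) (phiCap_zero hc.le) w)
      + ρ (compCc (phiDiff c) (phiDiff_zero hc.le) w) := by
    refine qi_comp_add hρ w _ _ _ _ _ _ (fun s => ?_)
    show min s c = min (max (s - c) 0) c + (min s c - min (max (s - c) 0) c)
    ring
  have hdpos : 0 ≤ ρ (compCc (phiDiff c) (phiDiff_zero hc.le) w) := by
    refine hρ.pos _ (fun x => ?_)
    rw [compCc_apply]
    show 0 ≤ min (w x) c - min (max (w x - c) 0) c
    have hw0 : 0 ≤ w x := by rw [hwx]; exact add_nonneg (hm0 x) (hk0 x)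
    rcases le_total (w x) c with h | h
    · rw [min_eq_left h, max_eq_right (by linarith), min_eq_left hc.le]; linarith
    · rw [min_eq_right h]
      have : min (max (w x - c) 0) c ≤ c := min_le_right _ _
      linarith
  rw [hA, hB] at hkey
  linarith

end Core2

end QLF


namespace QLF

open Set Function

section Core3

variable {Z : Type*} [TopologicalSpace Z] {ρ : C_c(Z, ℝ) → ℝ}

/-- Lower bound: if `f ≥ t ≥ 0` on an open set `W`, then `ρ f ≥ t * μ(W)`. -/
lemma qi_low (hρ : IsQuasiIntegral ρ) {f : C_c(Z, ℝ)} {W : Set Z} {t : ℝ}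
    (hW : IsOpen W) (ht : 0 ≤ t) (hf0 : ∀ x, 0 ≤ f x) (hfW : ∀ x ∈ W, t ≤ f x)
    (hfin : qiMeas ρ W ≠ ⊤) :
    t * (qiMeas ρ W).toReal ≤ ρ f := by
  rcases eq_or_lt_of_le ht with h0 | ht
  · rw [← h0, zero_mul]; exact hρ.pos f hf0
  -- now 0 < t
  by_contra hcon
  push_neg at hcon
  -- pick r with ρ f / t < r < (qiMeas ρ W).toReal
  set w : ℝ := (qiMeas ρ W).toReal
  have hw0 : 0 ≤ w := ENNReal.toReal_nonneg
  have hr1 : ρ f / t < w := by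
    rw [div_lt_iff₀ ht]
    linarith [hcon]
  set r : ℝ := (ρ f / t + w) / 2 with hrdef
  have hr2 : ρ f / t < r := by rw [hrdef]; linarith
  have hr3 : r < w := by rw [hrdef]; linarith
  have hrpos : 0 ≤ r := le_trans (div_nonneg (hρ.pos f hf0) ht.le) hr2.le
  -- extract a near optimizer
  have hlt : ENNReal.ofReal r < qiMeas ρ W :=
    (ENNReal.ofReal_lt_iff_lt_toReal hrpos hfin).mpr hr3
  rw [qiMeas_of_isOpen hW] at hlt
  rw [qiOpen, lt_iSup_iff] at hlt
  obtain ⟨k, hk⟩ := hlt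
  rw [lt_iSup_iff] at hk
  obtain ⟨⟨hkcand, hksupp⟩, hkr⟩ := hk
  have hkr' : r < ρ k := by
    by_contra hle
    push_neg at hle
    exact absurd (ENNReal.ofReal_le_ofReal hle) (not_le.mpr hkr)
  -- compare ρ f with ρ (t • k)
  have hcomp : ρ (t • k) ≤ ρ f := by
    refine qi_comparison hρ ht hf0 (fun x => ?_) (fun x => ?_) (fun x hx => ?_)
    · show 0 ≤ t * k x
      exact mul_nonneg ht.le (hkcand x).1
    · show t * k x ≤ t
      nlinarith [(hkcand x).2, (hkcand x).1]
    · refine hfW x ?_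
      refine hksupp (subset_trans (closure_minimal (fun y hy => ?_) (isClosed_tsupport k)) subset_rfl hx)
      have : t * k y ≠ 0 := hy
      have : k y ≠ 0 := fun h => this (by rw [h, mul_zero])
      exact subset_tsupport k this
  rw [hρ.smul t k] at hcomp
  have h1 : t * r < t * ρ k := mul_lt_mul_of_pos_left hkr' ht
  have h2 : ρ f < t * r := by
    have := (div_lt_iff₀ ht).mp hr2
    linarith [this, mul_comm r t]
  linarith

/-- Upper bound: if all level sets above `t ≥ 0` are null, then `ρ f ≤ t * μ(univ)`. -/
lemma qi_up (hρ : IsQuasiIntegral ρ) {f : C_c(Z, ℝ)} {t : ℝ}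
    (ht : 0 ≤ t) (hf0 : ∀ x, 0 ≤ f x)
    (hlev : ∀ s : ℝ, t < s → qiMeas ρ {x | s < f x} = 0)
    (hfin : qiMeas ρ (univ : Set Z) ≠ ⊤) :
    ρ f ≤ t * (qiMeas ρ (univ : Set Z)).toReal := by
  set m : ℝ := (qiMeas ρ (univ : Set Z)).toReal with hm
  have hm0 : 0 ≤ m := ENNReal.toReal_nonneg
  have key : ∀ c : ℝ, t < c → ρ f ≤ c * m := by
    intro c hc
    have hc0 : 0 < c := lt_of_le_of_lt ht hc
    rw [qi_layer hρ f hc0]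
    have h1 : ρ (compCc (phiMin c) (phiMin_zero hc0.le) f) ≤ c * m := by
      refine qi_scale_bound hρ isOpen_univ hc0 (fun x => ?_) (fun x => ?_)
        (subset_univ _) hfin
      · exact le_min (hf0 x) hc0.le
      · exact min_le_right _ _
    have h2 : ρ (compCc (phiExc c) (phiExc_zero hc0.le) f) = 0 := by
      set s : ℝ := (t + c) / 2 with hs
      have hts : t < s := by rw [hs]; linarith
      have hsc : s < c := by rw [hs]; linarith
      refine qi_zero_of_null hρ (hf0 := fun x => le_max_right _ _)
        (U := {x | s < f x}) (isOpen_lt continuous_const f.continuous) ?_ (hlev s hts)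
      have hcl : closure (support fun x => max (f x - c) 0) ⊆ {x : Z | c ≤ f x} := by
        refine closure_minimal (fun x hx => ?_) (isClosed_le continuous_const f.continuous)
        have hx' : max (f x - c) 0 ≠ 0 := hx
        have hpos : 0 < f x - c := by
          rcases le_or_gt (f x - c) 0 with h | h
          · exact absurd (max_eq_right h) hx'
          · exact h
        show c ≤ f x
        linarith
      intro x hx
      exact lt_of_lt_of_le hsc (hcl hx)
    linarith
  by_contra hcon
  push_neg at hcon
  set c : ℝ := t + (ρ f - t * m) / (m + 1) with hc
  have hm1 : 0 < m + 1 := by linarith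
  have htc : t < c := by
    rw [hc]
    have : 0 < (ρ f - t * m) / (m + 1) := div_pos (by linarith) hm1
    linarith
  have := key c htc
  rw [hc, add_mul] at this
  have hlt : (ρ f - t * m) / (m + 1) * m < ρ f - t * m := by
    rw [div_mul_eq_mul_div, div_lt_iff₀ hm1]
    nlinarith [hcon]
  linarith

end Core3

end QLF


namespace QLF

open Set Function

section Core4

variable {Z : Type*} [TopologicalSpace Z] {ρ : C_c(Z, ℝ) → ℝ}

/-- The quantile of `f` with respect to the topological measure of `ρ`. -/
noncomputable def qv (ρ : C_c(Z, ℝ) → ℝ) (f : C_c(Z, ℝ)) : ℝ :=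
  sSup {t : ℝ | 0 ≤ t ∧ (t = 0 ∨ qiMeas ρ {x | t < f x} ≠ 0)}

lemma qv_set_bddAbove (hρ : IsQuasiIntegral ρ) (f : C_c(Z, ℝ)) :
    BddAbove {t : ℝ | 0 ≤ t ∧ (t = 0 ∨ qiMeas ρ {x | t < f x} ≠ 0)} := by
  obtain ⟨M, hM, hfM⟩ := qi_exists_bound f
  refine ⟨M, fun t ht => ?_⟩
  rcases ht.2 with h0 | hne
  · rw [h0]; exact hM.le
  by_contra hlt
  push_neg at hlt
  have hempty : {x | t < f x} = (∅ : Set Z) := by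
    refine eq_empty_iff_forall_notMem.mpr fun x hx => ?_
    exact absurd (lt_of_lt_of_le hx (le_trans (hfM x) hlt.le)) (lt_irrefl t)
  rw [hempty, qiMeas_empty hρ] at hne
  exact hne rfl

lemma qv_nonneg (hρ : IsQuasiIntegral ρ) (f : C_c(Z, ℝ)) : 0 ≤ qv ρ f :=
  le_csSup (qv_set_bddAbove hρ f) ⟨le_refl 0, Or.inl rfl⟩

/-- lower representation bound: `qv f * c ≤ ρ f`. -/
lemma qi_rep_ge (hρ : IsQuasiIntegral ρ) {c : ℝ≥0∞} (hcT : c ≠ ⊤)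
    (hbin : ∀ U : Set Z, IsOpen U → qiMeas ρ U = 0 ∨ qiMeas ρ U = c)
    {f : C_c(Z, ℝ)} (hf0 : ∀ x, 0 ≤ f x) :
    qv ρ f * c.toReal ≤ ρ f := by
  have hc0 : 0 ≤ c.toReal := ENNReal.toReal_nonneg
  rcases eq_or_lt_of_le hc0 with hc | hc
  · rw [← hc, mul_zero]; exact hρ.pos f hf0
  have key : ∀ t ∈ {t : ℝ | 0 ≤ t ∧ (t = 0 ∨ qiMeas ρ {x | t < f x} ≠ 0)},
      t ≤ ρ f / c.toReal := by
    rintro t ⟨ht0, h0 | hne⟩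
    · rw [h0]; exact div_nonneg (hρ.pos f hf0) hc0
    · have hopen : IsOpen {x | t < f x} := isOpen_lt continuous_const f.continuous
      have hval : qiMeas ρ {x | t < f x} = c := (hbin _ hopen).resolve_left hne
      have hlow := qi_low hρ hopen ht0 hf0 (fun x hx => le_of_lt hx)
        (by rw [hval]; exact hcT)
      rw [hval] at hlow
      rw [le_div_iff₀ hc]
      exact hlow
  have : qv ρ f ≤ ρ f / c.toReal :=
    csSup_le ⟨0, le_refl 0, Or.inl rfl⟩ key
  calc qv ρ f * c.toReal ≤ ρ f / c.toReal * c.toReal :=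
        mul_le_mul_of_nonneg_right this hc0
  _ = ρ f := div_mul_cancel₀ _ (ne_of_gt hc)

/-- upper representation bound: `ρ f ≤ qv f * c`. -/
lemma qi_rep_le (hρ : IsQuasiIntegral ρ) {c : ℝ≥0∞} (hcT : c ≠ ⊤)
    (huniv : qiMeas ρ (univ : Set Z) = c)
    {f : C_c(Z, ℝ)} (hf0 : ∀ x, 0 ≤ f x) :
    ρ f ≤ qv ρ f * c.toReal := by
  have h := qi_up hρ (qv_nonneg hρ f) hf0 (fun s hs => ?_) (by rw [huniv]; exact hcT)
  · rw [huniv] at h; exact h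
  · by_contra hne
    have hs0 : 0 ≤ s := le_trans (qv_nonneg hρ f) hs.le
    have : s ∈ {t : ℝ | 0 ≤ t ∧ (t = 0 ∨ qiMeas ρ {x | t < f x} ≠ 0)} :=
      ⟨hs0, Or.inr hne⟩
    exact absurd (le_csSup (qv_set_bddAbove hρ f) this) (not_le.mpr hs)

/-- Lipschitz-type estimate. -/
lemma qi_lip (hρ : IsQuasiIntegral ρ) {c : ℝ≥0∞} (hcT : c ≠ ⊤)
    (hbin : ∀ U : Set Z, IsOpen U → qiMeas ρ U = 0 ∨ qiMeas ρ U = c)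
    (huniv : qiMeas ρ (univ : Set Z) = c)
    {f g : C_c(Z, ℝ)} (hf0 : ∀ x, 0 ≤ f x) (hg0 : ∀ x, 0 ≤ g x)
    {δ : ℝ} (hδ : 0 ≤ δ) (hfg : ∀ x, f x ≤ g x + δ) :
    ρ f ≤ ρ g + δ * c.toReal := by
  have hc0 : 0 ≤ c.toReal := ENNReal.toReal_nonneg
  have hq : qv ρ f ≤ qv ρ g + δ := by
    refine csSup_le ⟨0, le_refl 0, Or.inl rfl⟩ ?_
    rintro t ⟨ht0, h0 | hne⟩
    · rw [h0]; exact add_nonneg (qv_nonneg hρ g) hδ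
    rcases le_or_gt t δ with hle | hgt
    · exact le_trans hle (le_add_of_nonneg_left (qv_nonneg hρ g))
    · have hsub : {x | t < f x} ⊆ {x | t - δ < g x} := by
        intro x hx
        have := hfg x
        simp only [mem_setOf_eq] at hx ⊢
        linarith
      have hmono : qiMeas ρ {x | t < f x} ≤ qiMeas ρ {x | t - δ < g x} := by
        rw [qiMeas_of_isOpen (show IsOpen {x : Z | t < f x} from
            isOpen_lt continuous_const f.continuous),
          qiMeas_of_isOpen (show IsOpen {x : Z | t - δ < g x} from
            isOpen_lt continuous_const g.continuous)]
        exact qiOpen_mono hsub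
      have hne' : qiMeas ρ {x | t - δ < g x} ≠ 0 := by
        intro h0'
        rw [h0'] at hmono
        exact hne (le_antisymm hmono (zero_le))
      have : t - δ ∈ {t : ℝ | 0 ≤ t ∧ (t = 0 ∨ qiMeas ρ {x | t < g x} ≠ 0)} :=
        ⟨by linarith, Or.inr hne'⟩
      have h2 : t - δ ≤ qv ρ g := by
        rw [qv]; exact le_csSup (qv_set_bddAbove hρ g) this
      linarith
  calc ρ f ≤ qv ρ f * c.toReal := qi_rep_le hρ hcT huniv hf0
  _ ≤ (qv ρ g + δ) * c.toReal := mul_le_mul_of_nonneg_right hq hc0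
  _ = qv ρ g * c.toReal + δ * c.toReal := by ring
  _ ≤ ρ g + δ * c.toReal := by
      have := qi_rep_ge hρ hcT hbin hg0
      linarith

end Core4

end QLF


namespace QLF

open Set Function

section Core5

variable {Z : Type*} [TopologicalSpace Z] [T2Space Z] {ρ : C_c(Z, ℝ) → ℝ}

/-- Extraction of the combinatorial structure from an almost-simple, non-subadditive
quasi-integral. -/
lemma side_structure (hρ : IsQuasiIntegral ρ) (has : IsAlmostSimpleQI ρ)
    (hnm : ¬ IsSubadditiveOnOpens (qiMeas ρ)) :
    ∃ (c : ℝ≥0∞) (U1 U2 K K₂ : Set Z), 0 < c ∧ c ≠ ⊤ ∧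
      IsOpen U1 ∧ IsOpen U2 ∧ IsCompact K ∧ K ⊆ U1 ∪ U2 ∧
      qiMeas ρ U1 = 0 ∧ qiMeas ρ U2 = 0 ∧
      qiMeas ρ (univ : Set Z) = c ∧
      (∀ W : Set Z, IsOpen W → qiMeas ρ W = 0 ∨ qiMeas ρ W = c) ∧
      (∀ W : Set Z, IsOpen W → K ⊆ W → qiMeas ρ W = c) ∧
      IsCompact K₂ ∧ Disjoint K₂ (K \ U2) ∧
      (∀ W : Set Z, IsOpen W → K₂ ⊆ W → qiMeas ρ W = c) := by
  obtain ⟨c, μ', hc0, hcT, ⟨⟨tm1, tm2, tm3⟩, hsimple⟩, heq⟩ := has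
  rw [IsSubadditiveOnOpens] at hnm
  push_neg at hnm
  obtain ⟨U1, U2, hU1o, hU2o, hgt⟩ := hnm
  have hUo : IsOpen (U1 ∪ U2) := hU1o.union hU2o
  -- values of μ' on the three opens
  have hμU1 : μ' U1 = 0 := by
    rcases hsimple U1 (Or.inl hU1o) with h | h
    · exact h
    · exfalso
      have h1 : qiMeas ρ U1 = c := by rw [heq U1 (Or.inl hU1o), h, mul_one]
      have h2 : qiMeas ρ (U1 ∪ U2) ≤ c := by
        rw [heq _ (Or.inl hUo)]
        rcases hsimple _ (Or.inl hUo) with h' | h'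
        · rw [h', mul_zero]; exact zero_le
        · rw [h', mul_one]
      have h3 : c ≤ qiMeas ρ U1 + qiMeas ρ U2 := by rw [h1]; exact le_self_add
      exact absurd (lt_of_le_of_lt h3 hgt) (not_lt.mpr h2)
  have hμU2 : μ' U2 = 0 := by
    rcases hsimple U2 (Or.inl hU2o) with h | h
    · exact h
    · exfalso
      have h1 : qiMeas ρ U2 = c := by rw [heq U2 (Or.inl hU2o), h, mul_one]
      have h2 : qiMeas ρ (U1 ∪ U2) ≤ c := by
        rw [heq _ (Or.inl hUo)]
        rcases hsimple _ (Or.inl hUo) with h' | h'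
        · rw [h', mul_zero]; exact zero_le
        · rw [h', mul_one]
      have h3 : c ≤ qiMeas ρ U1 + qiMeas ρ U2 := by rw [h1]; exact le_add_self
      exact absurd (lt_of_le_of_lt h3 hgt) (not_lt.mpr h2)
  have hqU1 : qiMeas ρ U1 = 0 := by rw [heq U1 (Or.inl hU1o), hμU1, mul_zero]
  have hqU2 : qiMeas ρ U2 = 0 := by rw [heq U2 (Or.inl hU2o), hμU2, mul_zero]
  have hμU : μ' (U1 ∪ U2) = 1 := by
    rcases hsimple _ (Or.inl hUo) with h | h
    · exfalso
      have : qiMeas ρ (U1 ∪ U2) = 0 := by rw [heq _ (Or.inl hUo), h, mul_zero]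
      rw [this, hqU1, hqU2] at hgt
      simp at hgt
    · exact h
  have hqU : qiMeas ρ (U1 ∪ U2) = c := by rw [heq _ (Or.inl hUo), hμU, mul_one]
  -- universe
  have hμuniv : μ' (univ : Set Z) = 1 := by
    rcases hsimple univ (Or.inl isOpen_univ) with h | h
    · exfalso
      have h1 : qiMeas ρ (univ : Set Z) = 0 := by rw [heq _ (Or.inl isOpen_univ), h, mul_zero]
      have h2 : qiMeas ρ (U1 ∪ U2) ≤ qiMeas ρ (univ : Set Z) := by
        rw [qiMeas_of_isOpen hUo, qiMeas_of_isOpen isOpen_univ]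
        exact qiOpen_mono (subset_univ _)
      rw [h1, hqU] at h2
      exact hc0.ne' (le_antisymm h2 (zero_le))
    · exact h
  have hquniv : qiMeas ρ (univ : Set Z) = c := by rw [heq _ (Or.inl isOpen_univ), hμuniv, mul_one]
  -- binary values
  have hbin : ∀ W : Set Z, IsOpen W → qiMeas ρ W = 0 ∨ qiMeas ρ W = c := by
    intro W hW
    rcases hsimple W (Or.inl hW) with h | h
    · left; rw [heq _ (Or.inl hW), h, mul_zero]
    · right; rw [heq _ (Or.inl hW), h, mul_one]
  -- compact K with μ' K = 1
  have hK : ∃ K : Set Z, IsCompact K ∧ K ⊆ U1 ∪ U2 ∧ μ' K = 1 := by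
    by_contra hcon
    push_neg at hcon
    have : μ' (U1 ∪ U2) ≤ 0 := by
      rw [tm2 _ hUo]
      refine iSup_le fun K => iSup_le fun hKP => ?_
      rcases hsimple K (Or.inr hKP.1.isClosed) with h | h
      · rw [h]
      · exact absurd h (hcon K hKP.1 hKP.2)
    rw [hμU] at this
    exact one_ne_zero (le_antisymm this (zero_le))
  obtain ⟨K, hKc, hKsub, hμK⟩ := hK
  -- every open neighborhood of a full closed set is full
  have hfull : ∀ A : Set Z, IsClosed A → μ' A = 1 →
      ∀ W : Set Z, IsOpen W → A ⊆ W → qiMeas ρ W = c := by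
    intro A hAc hA W hW hAW
    have h2 := tm3 A hAc
    have h3 : μ' A ≤ μ' W := by
      rw [h2]
      exact iInf_le_of_le W (iInf_le_of_le ⟨hW, hAW⟩ le_rfl)
    have h4 : μ' W = 1 := by
      rcases hsimple W (Or.inl hW) with h | h
      · exfalso
        rw [hA, h] at h3
        exact one_ne_zero (le_antisymm h3 (zero_le))
      · exact h
    rw [heq _ (Or.inl hW), h4, mul_one]
  -- the end piece K \ U2 is null
  have hP1c : IsCompact (K \ U2) := hKc.diff hU2o
  have hP1closed : IsClosed (K \ U2) := hP1c.isClosed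
  have hP1sub : K \ U2 ⊆ U1 := by
    intro x hx
    rcases hKsub hx.1 with h | h
    · exact h
    · exact absurd h hx.2
  have hμP1 : μ' (K \ U2) = 0 := by
    have h2 := tm3 _ hP1closed
    have h3 : μ' (K \ U2) ≤ μ' U1 := by
      rw [h2]
      exact iInf_le_of_le U1 (iInf_le_of_le ⟨hU1o, hP1sub⟩ le_rfl)
    rw [hμU1] at h3
    exact le_antisymm h3 (zero_le)
  -- complement has full measure
  have hcompl : μ' ((K \ U2)ᶜ) = 1 := by
    have h1 := tm1 (K \ U2) ((K \ U2)ᶜ) disjoint_compl_right (Or.inl hP1c)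
      (Or.inr hP1closed.isOpen_compl)
      (Or.inr (by rw [union_compl_self]; exact isOpen_univ))
    rw [union_compl_self, hμuniv, hμP1, zero_add] at h1
    exact h1.symm
  -- extract K₂
  have hK2 : ∃ K₂ : Set Z, IsCompact K₂ ∧ K₂ ⊆ (K \ U2)ᶜ ∧ μ' K₂ = 1 := by
    by_contra hcon
    push_neg at hcon
    have : μ' ((K \ U2)ᶜ) ≤ 0 := by
      rw [tm2 _ hP1closed.isOpen_compl]
      refine iSup_le fun K' => iSup_le fun hKP => ?_
      rcases hsimple K' (Or.inr hKP.1.isClosed) with h | h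
      · rw [h]
      · exact absurd h (hcon K' hKP.1 hKP.2)
    rw [hcompl] at this
    exact absurd (le_antisymm this (zero_le)) one_ne_zero
  obtain ⟨K₂, hK2c, hK2sub, hμK2⟩ := hK2
  refine ⟨c, U1, U2, K, K₂, hc0, hcT, hU1o, hU2o, hKc, hKsub, hqU1, hqU2, hquniv, hbin,
    fun W hW hKW => hfull K hKc.isClosed hμK W hW hKW, hK2c, ?_, 
    fun W hW hKW => hfull K₂ hK2c.isClosed hμK2 W hW hKW⟩
  exact disjoint_left.mpr fun x hx hxP => (hK2sub hx) hxP

end Core5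

end QLF


namespace QLF

open Set Function

section Core6

variable {Z : Type*} [TopologicalSpace Z] [T2Space Z] [LocallyCompactSpace Z]

/-- Urysohn function with a plateau: equals 1 on an open neighborhood of `K`,
compactly supported inside `N`. -/
lemma urysohn_plateau {K N : Set Z} (hK : IsCompact K) (hN : IsOpen N) (hKN : K ⊆ N) :
    ∃ (Φ : C_c(Z, ℝ)) (A : Set Z), IsOpen A ∧ K ⊆ A ∧ (∀ x ∈ A, Φ x = 1) ∧
      (∀ x, 0 ≤ Φ x ∧ Φ x ≤ 1) ∧ tsupport (Φ : Z → ℝ) ⊆ N := by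
  obtain ⟨C, hCc, hKC, hCN⟩ := exists_compact_between hK hN hKN
  obtain ⟨C', hC'c, hCC', hC'N⟩ := exists_compact_between hCc hN hCN
  obtain ⟨f, hf1, hf0, hfc, hficc⟩ := exists_continuous_one_zero_of_isCompact hCc
    (isOpen_interior.isClosed_compl) (disjoint_compl_right_iff_subset.mpr hCC')
  refine ⟨⟨f, hfc⟩, interior C, isOpen_interior, hKC, ?_, ?_, ?_⟩
  · intro x hx
    exact hf1 (interior_subset hx)
  · intro x
    exact ⟨(hficc x).1, (hficc x).2⟩
  · have hsupp : support f ⊆ interior C' := by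
      intro x hx
      by_contra hmem
      exact hx (hf0 hmem)
    calc tsupport (⇑(⟨f, hfc⟩ : C_c(Z, ℝ))) = closure (support f) := rfl
    _ ⊆ closure (interior C') := closure_mono hsupp
    _ ⊆ C' := closure_minimal interior_subset hC'c.isClosed
    _ ⊆ N := hC'N

/-- A two-set partition of unity over a compact set. -/
lemma partition_pair {L V1 V2 : Set Z} (hL : IsCompact L) (hV1 : IsOpen V1)
    (hV2 : IsOpen V2) (hcov : L ⊆ V1 ∪ V2) :
    ∃ h1 h2 : C_c(Z, ℝ), (∀ y, 0 ≤ h1 y ∧ h1 y ≤ 1) ∧ (∀ y, 0 ≤ h2 y ∧ h2 y ≤ 1) ∧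
      (∀ y, h1 y + h2 y ≤ 1) ∧ (∀ y ∈ L, h1 y + h2 y = 1) ∧
      tsupport (h1 : Z → ℝ) ⊆ V1 ∧ tsupport (h2 : Z → ℝ) ⊆ V2 := by
  have hA : IsCompact (L \ V2) := hL.diff hV2
  have hAV1 : L \ V2 ⊆ V1 := by
    intro x hx
    rcases hcov hx.1 with h | h
    · exact h
    · exact absurd h hx.2
  obtain ⟨f1, A1, hA1o, hA1sub, hf1one, hf1icc, hf1supp⟩ := urysohn_plateau hA hV1 hAV1
  have hB : IsCompact (L \ A1) := hL.diff hA1o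
  have hBV2 : L \ A1 ⊆ V2 := by
    intro x hx
    rcases hcov hx.1 with h | h
    · by_contra hv2
      exact hx.2 (hA1sub ⟨hx.1, hv2⟩)
    · exact h
  obtain ⟨f2, A2, hA2o, hA2sub, hf2one, hf2icc, hf2supp⟩ := urysohn_plateau hB hV2 hBV2
  -- h2 = f2 * (1 - f1)
  have hcont : Continuous fun y => f2 y * (1 - f1 y) :=
    f2.continuous.mul (continuous_const.sub f1.continuous)
  have hcs : HasCompactSupport fun y => f2 y * (1 - f1 y) := by
    refine HasCompactSupport.intro f2.hasCompactSupport fun y hy => ?_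
    rw [image_eq_zero_of_notMem_tsupport hy, zero_mul]
  refine ⟨f1, ⟨⟨fun y => f2 y * (1 - f1 y), hcont⟩, hcs⟩, hf1icc, ?_, ?_, ?_, hf1supp, ?_⟩
  · intro y
    constructor
    · exact mul_nonneg (hf2icc y).1 (by linarith [(hf1icc y).2])
    · calc f2 y * (1 - f1 y) ≤ 1 * (1 - f1 y) :=
            mul_le_mul_of_nonneg_right (hf2icc y).2 (by linarith [(hf1icc y).2])
      _ = 1 - f1 y := one_mul _
      _ ≤ 1 := by linarith [(hf1icc y).1]
  · intro y
    show f1 y + f2 y * (1 - f1 y) ≤ 1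
    nlinarith [(hf1icc y).1, (hf1icc y).2, (hf2icc y).1, (hf2icc y).2]
  · intro y hy
    show f1 y + f2 y * (1 - f1 y) = 1
    by_cases hmem : y ∈ A1
    · rw [hf1one y hmem]; ring
    · rw [hf2one y (hA2sub ⟨hy, hmem⟩)]; ring
  · show tsupport (fun y => f2 y * (1 - f1 y)) ⊆ V2
    refine subset_trans (closure_minimal (fun y hy => ?_) (isClosed_tsupport (f2 : Z → ℝ))) hf2supp
    have : f2 y ≠ 0 := fun h => hy (by simp [mem_support, h])
    exact subset_tsupport _ this

end Core6

end QLF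


namespace QLF

open Set Function

/-- helper : `a * s ≤ |a|` when `0 ≤ s ≤ 1`. -/
private lemma mul_le_abs' {a s : ℝ} (h0 : 0 ≤ s) (h1 : s ≤ 1) : a * s ≤ |a| := by
  rcases le_or_gt 0 a with ha | ha
  · calc a * s ≤ a * 1 := mul_le_mul_of_nonneg_left h1 ha
    _ = a := mul_one a
    _ ≤ |a| := le_abs_self a
  · calc a * s ≤ 0 := mul_nonpos_of_nonpos_of_nonneg ha.le h0
    _ ≤ |a| := abs_nonneg a

set_option maxHeartbeats 2000000 in
theorem statement17' {X Y : Type*}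
    [TopologicalSpace X] [LocallyCompactSpace X] [T2Space X] [ConnectedSpace X]
    [TopologicalSpace Y] [LocallyCompactSpace Y] [T2Space Y] [ConnectedSpace Y]
    (ρ : C_c(X, ℝ) → ℝ) (η : C_c(Y, ℝ) → ℝ)
    (hρ : IsQuasiIntegral ρ) (hη : IsQuasiIntegral η)
    (hρas : IsAlmostSimpleQI ρ) (hηas : IsAlmostSimpleQI η)
    (hρnm : ¬ IsSubadditiveOnOpens (qiMeas ρ)) (hηnm : ¬ IsSubadditiveOnOpens (qiMeas η)) :
    prodQI η ρ ≠ prodQI' ρ η := by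
  obtain ⟨c, U1, U2, K, K₂, hc0, hcT, hU1o, hU2o, hKc, hKsub, hqU1, hqU2, hquniv, hbinX,
    hfullK, hK2c, hdisj, hfullK2⟩ := side_structure hρ hρas hρnm
  obtain ⟨d, V1, V2, L, L₂, hd0, hdT, hV1o, hV2o, hLc, hLsub, hqV1, hqV2, hqunivY, hbinY,
    hfullL, _, _, _⟩ := side_structure hη hηas hηnm
  have hcpos : 0 < c.toReal := ENNReal.toReal_pos hc0.ne' hcT
  have hdpos : 0 < d.toReal := ENNReal.toReal_pos hd0.ne' hdT
  -- X-side separation and plateau bumps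
  have hS1 : IsCompact (K \ U2) := hKc.diff hU2o
  have hS2 : IsCompact (K₂ \ U2) := hK2c.diff hU2o
  have hdisj' : Disjoint (K \ U2) (K₂ \ U2) :=
    Set.disjoint_left.mpr fun x hx1 hx2 => (Set.disjoint_left.mp hdisj) hx2.1 hx1
  obtain ⟨D1, D2, hD1o, hD2o, hsub1, hsub2, hDdisj⟩ :=
    SeparatedNhds.of_isCompact_isCompact hS1 hS2 hdisj'
  set N1 : Set X := D1 ∪ U2 with hN1def
  set N2 : Set X := D2 ∪ U2 with hN2def
  have hN1o : IsOpen N1 := hD1o.union hU2o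
  have hN2o : IsOpen N2 := hD2o.union hU2o
  have hKN1 : K ⊆ N1 := by
    intro x hx
    by_cases h : x ∈ U2
    · exact Or.inr h
    · exact Or.inl (hsub1 ⟨hx, h⟩)
  have hK2N2 : K₂ ⊆ N2 := by
    intro x hx
    by_cases h : x ∈ U2
    · exact Or.inr h
    · exact Or.inl (hsub2 ⟨hx, h⟩)
  have hN1N2 : N1 ∩ N2 ⊆ U2 := by
    rintro x ⟨hx1, hx2⟩
    rcases hx1 with h1 | h1
    · rcases hx2 with h2 | h2
      · exact absurd h2 (Set.disjoint_left.mp hDdisj h1)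
      · exact h2
    · exact h1
  obtain ⟨Φ1, A1, hA1o, hKA1, hΦ1one, hΦ1icc, hΦ1supp⟩ := urysohn_plateau hKc hN1o hKN1
  obtain ⟨Φ2, A2, hA2o, hK2A2, hΦ2one, hΦ2icc, hΦ2supp⟩ := urysohn_plateau hK2c hN2o hK2N2
  have hqA1 : qiMeas ρ A1 = c := hfullK A1 hA1o hKA1
  have hqA2 : qiMeas ρ A2 = c := hfullK2 A2 hA2o hK2A2
  -- Y-side partition of unity
  obtain ⟨h1, h2, hh1icc, hh2icc, hsum_le, hsum_eq, hh1supp, hh2supp⟩ :=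
    partition_pair hLc hV1o hV2o hLsub
  -- the witness function
  set F : C_c(X × Y, ℝ) := tensor Φ1 h1 + tensor Φ2 h2 with hFdef
  have hfib_y : ∀ y : Y, fiberY F y = h1 y • Φ1 + h2 y • Φ2 := by
    intro y
    refine CompactlySupportedContinuousMap.ext fun x => ?_
    show F (x, y) = (h1 y • Φ1 + h2 y • Φ2) x
    rw [hFdef]
    rw [CompactlySupportedContinuousMap.add_apply, CompactlySupportedContinuousMap.add_apply,
      CompactlySupportedContinuousMap.smul_apply, CompactlySupportedContinuousMap.smul_apply]
    show Φ1 x * h1 y + Φ2 x * h2 y = h1 y • Φ1 x + h2 y • Φ2 x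
    rw [smul_eq_mul, smul_eq_mul]
    ring
  have hfib_x : ∀ x : X, fiberX F x = Φ1 x • h1 + Φ2 x • h2 := by
    intro x
    refine CompactlySupportedContinuousMap.ext fun y => ?_
    show F (x, y) = (Φ1 x • h1 + Φ2 x • h2) y
    rw [hFdef]
    rw [CompactlySupportedContinuousMap.add_apply, CompactlySupportedContinuousMap.add_apply,
      CompactlySupportedContinuousMap.smul_apply, CompactlySupportedContinuousMap.smul_apply]
    show Φ1 x * h1 y + Φ2 x * h2 y = Φ1 x • h1 y + Φ2 x • h2 y
    rw [smul_eq_mul, smul_eq_mul]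
  -- nonnegativity of the fibers
  have hv0y : ∀ (y : Y) (x : X), 0 ≤ (h1 y • Φ1 + h2 y • Φ2) x := by
    intro y x
    rw [CompactlySupportedContinuousMap.add_apply, CompactlySupportedContinuousMap.smul_apply,
      CompactlySupportedContinuousMap.smul_apply, smul_eq_mul, smul_eq_mul]
    exact add_nonneg (mul_nonneg (hh1icc y).1 (hΦ1icc x).1) (mul_nonneg (hh2icc y).1 (hΦ2icc x).1)
  have hv0x : ∀ (x : X) (y : Y), 0 ≤ (Φ1 x • h1 + Φ2 x • h2) y := by
    intro x y
    rw [CompactlySupportedContinuousMap.add_apply, CompactlySupportedContinuousMap.smul_apply,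
      CompactlySupportedContinuousMap.smul_apply, smul_eq_mul, smul_eq_mul]
    exact add_nonneg (mul_nonneg (hΦ1icc x).1 (hh1icc y).1) (mul_nonneg (hΦ2icc x).1 (hh2icc y).1)
  -- T and its properties
  have hT_eq : ∀ y : Y, Tmap ρ F y = ρ (h1 y • Φ1 + h2 y • Φ2) := by
    intro y
    show ρ (fiberY F y) = _
    rw [hfib_y y]
  have hT0 : ∀ y : Y, 0 ≤ Tmap ρ F y := by
    intro y
    rw [hT_eq y]
    exact hρ.pos _ (hv0y y)
  -- Lipschitz-type bound for T
  have hlipT : ∀ y y' : Y, Tmap ρ F y ≤ Tmap ρ F y'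
      + (|h1 y - h1 y'| + |h2 y - h2 y'|) * c.toReal := by
    intro y y'
    rw [hT_eq y, hT_eq y']
    refine qi_lip hρ hcT hbinX hquniv (hv0y y) (hv0y y')
      (add_nonneg (abs_nonneg _) (abs_nonneg _)) (fun x => ?_)
    rw [CompactlySupportedContinuousMap.add_apply, CompactlySupportedContinuousMap.smul_apply,
      CompactlySupportedContinuousMap.smul_apply, CompactlySupportedContinuousMap.add_apply,
      CompactlySupportedContinuousMap.smul_apply, CompactlySupportedContinuousMap.smul_apply,
      smul_eq_mul, smul_eq_mul, smul_eq_mul, smul_eq_mul]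
    have e1 : (h1 y - h1 y') * Φ1 x ≤ |h1 y - h1 y'| :=
      mul_le_abs' (hΦ1icc x).1 (hΦ1icc x).2
    have e2 : (h2 y - h2 y') * Φ2 x ≤ |h2 y - h2 y'| :=
      mul_le_abs' (hΦ2icc x).1 (hΦ2icc x).2
    nlinarith [e1, e2]
  have hcontT : Continuous (Tmap ρ F) := by
    rw [continuous_iff_continuousAt]
    intro y₀
    set δf : Y → ℝ := fun y => (|h1 y - h1 y₀| + |h2 y - h2 y₀|) * c.toReal with hδf
    have hδcont : Continuous δf := by
      refine Continuous.mul ?_ continuous_const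
      exact ((h1.continuous.sub continuous_const).abs.add
        ((h2.continuous.sub continuous_const).abs))
    have hδ0 : δf y₀ = 0 := by
      rw [hδf]
      simp
    have hub : ∀ y, Tmap ρ F y ≤ Tmap ρ F y₀ + δf y := fun y => hlipT y y₀
    have hlb : ∀ y, Tmap ρ F y₀ - δf y ≤ Tmap ρ F y := by
      intro y
      have h := hlipT y₀ y
      rw [abs_sub_comm (h1 y₀) (h1 y), abs_sub_comm (h2 y₀) (h2 y)] at h
      have hδfy : δf y = (|h1 y - h1 y₀| + |h2 y - h2 y₀|) * c.toReal := rfl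
      linarith [h, hδfy.ge, hδfy.le]
    have hg : Filter.Tendsto (fun y => Tmap ρ F y₀ - δf y) (nhds y₀) (nhds (Tmap ρ F y₀)) := by
      have hc' : Continuous fun y : Y => Tmap ρ F y₀ - δf y := continuous_const.sub hδcont
      have h := hc'.tendsto y₀
      rw [hδ0, sub_zero] at h
      exact h
    have hh : Filter.Tendsto (fun y => Tmap ρ F y₀ + δf y) (nhds y₀) (nhds (Tmap ρ F y₀)) := by
      have hc' : Continuous fun y : Y => Tmap ρ F y₀ + δf y := continuous_const.add hδcont
      have h := hc'.tendsto y₀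
      rw [hδ0, add_zero] at h
      exact h
    exact tendsto_of_tendsto_of_tendsto_of_le_of_le hg hh hlb hub
  have hcsT : HasCompactSupport (Tmap ρ F) := by
    refine HasCompactSupport.intro (h1.hasCompactSupport.union h2.hasCompactSupport)
      (fun y hy => ?_)
    have h1y : h1 y = 0 := image_eq_zero_of_notMem_tsupport fun h => hy (Or.inl h)
    have h2y : h2 y = 0 := image_eq_zero_of_notMem_tsupport fun h => hy (Or.inr h)
    rw [hT_eq y, h1y, h2y, zero_smul, zero_smul, add_zero, qi_zero hρ]
  -- lower bound for side 1
  set W : Set Y := {y | (1 : ℝ)/3 < max (h1 y) (h2 y)} with hWdef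
  have hWo : IsOpen W := isOpen_lt continuous_const (h1.continuous.max h2.continuous)
  have hLW : L ⊆ W := by
    intro y hy
    have hsum := hsum_eq y hy
    show (1 : ℝ)/3 < max (h1 y) (h2 y)
    rcases le_total (h1 y) (h2 y) with h | h
    · have : (1 : ℝ)/2 ≤ h2 y := by linarith
      exact lt_of_lt_of_le (by norm_num) (le_trans this (le_max_right _ _))
    · have : (1 : ℝ)/2 ≤ h1 y := by linarith
      exact lt_of_lt_of_le (by norm_num) (le_trans this (le_max_left _ _))
  have hqW : qiMeas η W = d := hfullL W hWo hLW
  have hTlow : ∀ y ∈ W, c.toReal/3 ≤ Tmap ρ F y := by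
    intro y hy
    have hb1 : h1 y * c.toReal ≤ Tmap ρ F y := by
      rw [hT_eq y]
      have := qi_low hρ hA1o (hh1icc y).1 (hv0y y) (fun x hx => ?_)
        (by rw [hqA1]; exact hcT)
      · rw [hqA1] at this; exact this
      · rw [CompactlySupportedContinuousMap.add_apply, CompactlySupportedContinuousMap.smul_apply,
          CompactlySupportedContinuousMap.smul_apply, smul_eq_mul, smul_eq_mul, hΦ1one x hx]
        nlinarith [(hh2icc y).1, (hΦ2icc x).1]
    have hb2 : h2 y * c.toReal ≤ Tmap ρ F y := by
      rw [hT_eq y]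
      have := qi_low hρ hA2o (hh2icc y).1 (hv0y y) (fun x hx => ?_)
        (by rw [hqA2]; exact hcT)
      · rw [hqA2] at this; exact this
      · rw [CompactlySupportedContinuousMap.add_apply, CompactlySupportedContinuousMap.smul_apply,
          CompactlySupportedContinuousMap.smul_apply, smul_eq_mul, smul_eq_mul, hΦ2one x hx]
        nlinarith [(hh1icc y).1, (hΦ1icc x).1]
    have hmax : (1 : ℝ)/3 < max (h1 y) (h2 y) := hy
    rcases le_total (h1 y) (h2 y) with h | h
    · rw [max_eq_right h] at hmax
      nlinarith [hb2, hcpos]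
    · rw [max_eq_left h] at hmax
      nlinarith [hb1, hcpos]
  -- value of side 1
  have hTCc : TCc ρ F = ⟨⟨Tmap ρ F, hcontT⟩, hcsT⟩ := by
    rw [TCc, dif_pos ⟨hcontT, hcsT⟩]
  have hside1 : c.toReal/3 * d.toReal ≤ prodQI η ρ F := by
    show c.toReal/3 * d.toReal ≤ η (TCc ρ F)
    rw [hTCc]
    have := qi_low hη hWo (by positivity) (f := ⟨⟨Tmap ρ F, hcontT⟩, hcsT⟩)
      (fun y => hT0 y) (fun y hy => hTlow y hy) (by rw [hqW]; exact hdT)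
    rw [hqW] at this
    exact this
  -- side 2 : exact value of S
  have hS_eq : ∀ x : X, Smap η F x = η (Φ1 x • h1 + Φ2 x • h2) := by
    intro x
    show η (fiberX F x) = _
    rw [hfib_x x]
  have hSval : ∀ x : X, Smap η F x = min (Φ1 x) (Φ2 x) * d.toReal := by
    intro x
    set b1 : ℝ := Φ1 x with hb1def
    set b2 : ℝ := Φ2 x with hb2def
    have hb10 : 0 ≤ b1 := (hΦ1icc x).1
    have hb20 : 0 ≤ b2 := (hΦ2icc x).1
    have hmin0 : 0 ≤ min b1 b2 := le_min hb10 hb20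
    refine le_antisymm ?_ ?_
    · -- upper bound
      rw [hS_eq x]
      have hup := qi_up hη hmin0 (hv0x x) (fun s hs => ?_) (by rw [hqunivY]; exact hdT)
      · rw [hqunivY] at hup; exact hup
      · -- level sets above the min are null
        have hvx : ∀ y, (Φ1 x • h1 + Φ2 x • h2) y = b1 * h1 y + b2 * h2 y := by
          intro y
          rw [CompactlySupportedContinuousMap.add_apply,
            CompactlySupportedContinuousMap.smul_apply,
            CompactlySupportedContinuousMap.smul_apply, smul_eq_mul, smul_eq_mul]
        rcases le_total b1 b2 with hb | hb
        · -- level set inside V2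
          have hsubV : {y | s < (Φ1 x • h1 + Φ2 x • h2) y} ⊆ V2 := by
            intro y hy
            rw [mem_setOf_eq, hvx y] at hy
            rw [min_eq_left hb] at hs
            have hy2 : 0 < h2 y := by
              by_contra hc2
              push_neg at hc2
              have h2y0 : h2 y = 0 := le_antisymm hc2 (hh2icc y).1
              rw [h2y0, mul_zero, add_zero] at hy
              nlinarith [(hh1icc y).2, hy, hs, hb10]
            exact hh2supp (subset_tsupport _ (ne_of_gt hy2))
          have hlev_open : IsOpen {y | s < (Φ1 x • h1 + Φ2 x • h2) y} :=
            isOpen_lt continuous_const (Φ1 x • h1 + Φ2 x • h2).continuous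
          have : qiMeas η {y | s < (Φ1 x • h1 + Φ2 x • h2) y} ≤ qiMeas η V2 := by
            rw [qiMeas_of_isOpen hlev_open, qiMeas_of_isOpen hV2o]
            exact qiOpen_mono hsubV
          rw [hqV2] at this
          exact le_antisymm this (zero_le)
        · -- level set inside V1
          have hsubV : {y | s < (Φ1 x • h1 + Φ2 x • h2) y} ⊆ V1 := by
            intro y hy
            rw [mem_setOf_eq, hvx y] at hy
            rw [min_eq_right hb] at hs
            have hy1 : 0 < h1 y := by
              by_contra hc1
              push_neg at hc1
              have h1y0 : h1 y = 0 := le_antisymm hc1 (hh1icc y).1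
              rw [h1y0, mul_zero, zero_add] at hy
              nlinarith [(hh2icc y).2, hy, hs, hb20]
            exact hh1supp (subset_tsupport _ (ne_of_gt hy1))
          have hlev_open : IsOpen {y | s < (Φ1 x • h1 + Φ2 x • h2) y} :=
            isOpen_lt continuous_const (Φ1 x • h1 + Φ2 x • h2).continuous
          have : qiMeas η {y | s < (Φ1 x • h1 + Φ2 x • h2) y} ≤ qiMeas η V1 := by
            rw [qiMeas_of_isOpen hlev_open, qiMeas_of_isOpen hV1o]
            exact qiOpen_mono hsubV
          rw [hqV1] at this
          exact le_antisymm this (zero_le)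
    · -- lower bound
      rw [hS_eq x]
      have hklow : ∀ δ : ℝ, 0 < δ → δ < 1 →
          min b1 b2 * (1 - δ) * d.toReal ≤ η (Φ1 x • h1 + Φ2 x • h2) := by
        intro δ hδ0 hδ1
        set Wδ : Set Y := {y | 1 - δ < h1 y + h2 y} with hWδdef
        have hWδo : IsOpen Wδ := isOpen_lt continuous_const (h1.continuous.add h2.continuous)
        have hLWδ : L ⊆ Wδ := by
          intro y hy
          show 1 - δ < h1 y + h2 y
          rw [hsum_eq y hy]
          linarith
        have hqWδ : qiMeas η Wδ = d := hfullL Wδ hWδo hLWδ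
        have := qi_low (t := min b1 b2 * (1 - δ)) hη hWδo (by nlinarith [hmin0]) (hv0x x)
          (fun y hy => ?_) (by rw [hqWδ]; exact hdT)
        · rw [hqWδ] at this; exact this
        · rw [CompactlySupportedContinuousMap.add_apply,
            CompactlySupportedContinuousMap.smul_apply,
            CompactlySupportedContinuousMap.smul_apply, smul_eq_mul, smul_eq_mul]
          have hy' : 1 - δ < h1 y + h2 y := hy
          have e1 : min b1 b2 ≤ b1 := min_le_left _ _
          have e2 : min b1 b2 ≤ b2 := min_le_right _ _
          nlinarith [(hh1icc y).1, (hh2icc y).1, hmin0]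
      by_contra hcon
      push_neg at hcon
      have hη0 : 0 ≤ η (Φ1 x • h1 + Φ2 x • h2) := hη.pos _ (hv0x x)
      have hmd : 0 < min b1 b2 * d.toReal := lt_of_le_of_lt hη0 hcon
      set ε : ℝ := min b1 b2 * d.toReal - η (Φ1 x • h1 + Φ2 x • h2) with hεdef
      have hε0 : 0 < ε := by rw [hεdef]; linarith
      set δ : ℝ := ε / (2 * (min b1 b2 * d.toReal)) with hδdef
      have hδpos : 0 < δ := div_pos hε0 (by linarith)
      have hεle : ε ≤ min b1 b2 * d.toReal := by rw [hεdef]; linarith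
      have hδlt : δ < 1 := by
        rw [hδdef, div_lt_one (by linarith)]
        linarith
      have := hklow δ hδpos hδlt
      have hcalc : min b1 b2 * (1 - δ) * d.toReal
          = min b1 b2 * d.toReal - δ * (min b1 b2 * d.toReal) := by ring
      have hδval : δ * (min b1 b2 * d.toReal) = ε / 2 := by
        rw [hδdef, div_mul_eq_mul_div, div_eq_iff (mul_pos two_pos hmd).ne']
        ring
      rw [hcalc, hδval] at this
      rw [hεdef] at this
      linarith
  -- continuity and compact support of S
  have hSfun : Smap η F = fun x => min (Φ1 x) (Φ2 x) * d.toReal := funext hSval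
  have hcontS : Continuous (Smap η F) := by
    rw [hSfun]
    exact (Φ1.continuous.min Φ2.continuous).mul continuous_const
  have hcsS : HasCompactSupport (Smap η F) := by
    refine HasCompactSupport.intro Φ1.hasCompactSupport (fun x hx => ?_)
    rw [hSval x, image_eq_zero_of_notMem_tsupport hx, min_eq_left (hΦ2icc x).1, zero_mul]
  have hSCc : SCc η F = ⟨⟨Smap η F, hcontS⟩, hcsS⟩ := by
    rw [SCc, dif_pos ⟨hcontS, hcsS⟩]
  -- side 2 is zero
  have hside2 : prodQI' ρ η F = 0 := by
    show ρ (SCc η F) = 0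
    rw [hSCc]
    have hS0 : ∀ x, 0 ≤ (⟨⟨Smap η F, hcontS⟩, hcsS⟩ : C_c(X, ℝ)) x := by
      intro x
      show 0 ≤ Smap η F x
      rw [hSval x]
      exact mul_nonneg (le_min (hΦ1icc x).1 (hΦ2icc x).1) hdpos.le
    refine le_antisymm ?_ (hρ.pos _ hS0)
    have hup := qi_up hρ (le_refl (0:ℝ)) hS0 (fun s hs => ?_) (by rw [hquniv]; exact hcT)
    · rw [hquniv, zero_mul] at hup; exact hup
    · -- level sets are inside U2
      have hsubU : {x | s < (⟨⟨Smap η F, hcontS⟩, hcsS⟩ : C_c(X, ℝ)) x} ⊆ U2 := by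
        intro x hx
        have hx' : s < min (Φ1 x) (Φ2 x) * d.toReal := by
          have : s < Smap η F x := hx
          rw [hSval x] at this
          exact this
        have hmin : 0 < min (Φ1 x) (Φ2 x) := by nlinarith [hdpos]
        have hΦ1x : Φ1 x ≠ 0 := by
          have := lt_of_lt_of_le hmin (min_le_left (Φ1 x) (Φ2 x))
          exact ne_of_gt this
        have hΦ2x : Φ2 x ≠ 0 := by
          have := lt_of_lt_of_le hmin (min_le_right (Φ1 x) (Φ2 x))
          exact ne_of_gt this
        refine hN1N2 ⟨hΦ1supp (subset_tsupport _ hΦ1x), hΦ2supp (subset_tsupport _ hΦ2x)⟩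
      have hlev_open : IsOpen {x | s < (⟨⟨Smap η F, hcontS⟩, hcsS⟩ : C_c(X, ℝ)) x} :=
        isOpen_lt continuous_const hcontS
      have : qiMeas ρ {x | s < (⟨⟨Smap η F, hcontS⟩, hcsS⟩ : C_c(X, ℝ)) x} ≤ qiMeas ρ U2 := by
        rw [qiMeas_of_isOpen hlev_open, qiMeas_of_isOpen hU2o]
        exact qiOpen_mono hsubU
      rw [hqU2] at this
      exact le_antisymm this (zero_le)
  -- conclusion
  intro hEq
  have := congrFun hEq F
  rw [hside2] at this
  have hpos : 0 < c.toReal/3 * d.toReal := by positivity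
  rw [this] at hside1
  linarith

end QLF



namespace QLF
theorem statement17 {X Y : Type*}
    [TopologicalSpace X] [LocallyCompactSpace X] [T2Space X] [ConnectedSpace X]
    [TopologicalSpace Y] [LocallyCompactSpace Y] [T2Space Y] [ConnectedSpace Y]
    (ρ : C_c(X, ℝ) → ℝ) (η : C_c(Y, ℝ) → ℝ)
    (hρ : IsQuasiIntegral ρ) (hη : IsQuasiIntegral η)
    (hρas : IsAlmostSimpleQI ρ) (hηas : IsAlmostSimpleQI η)
    (hρnm : ¬ IsSubadditiveOnOpens (qiMeas ρ)) (hηnm : ¬ IsSubadditiveOnOpens (qiMeas η)) :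
    prodQI η ρ ≠ prodQI' ρ η := by
  exact statement17' ρ η hρ hη hρas hηas hρnm hηnm
end QLF
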